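/- arXiv:1411.2101 — 2 statements merged into one kernel-verified Lean document; each statement's English description precedes it below -/
import Mathlib

section
/- Let l ≥ 0 be a real number, k ≥ 1 an integer, a_1, …, a_k real numbers satisfying a_i ≤ a_1 + (i−1)·l for all i, and r_1, …, r_k positive integers with r = r_1 + ⋯ + r_k. If (∑_{i=1}^{k} a_i·r_i)/r > (r−1)·l/2, then a_1 > 0. -/
/-- Key combinatorial bound: if all `r i ≥ 1` then `2 ∑ i·r i + ∑ r i ≤ (∑ r i)²`. -/
lemma aux_sum_bound : ∀ (k : ℕ) (r : Fin k → ℕ), (∀ i, 1 ≤ r i) →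
    2 * ∑ i : Fin k, (i : ℕ) * r i + ∑ i, r i ≤ (∑ i, r i) ^ 2 := by
  intro k
  induction k with
  | zero => intro r _; simp
  | succ n ih =>
    intro r hr
    have h1 : ∑ i : Fin (n+1), (i : ℕ) * r i
        = ∑ i : Fin n, ((i : ℕ) + 1) * r i.succ := by
      rw [Fin.sum_univ_succ]; simp [Fin.val_succ]
    have h2 : ∑ i : Fin (n+1), r i = r 0 + ∑ i : Fin n, r i.succ :=
      Fin.sum_univ_succ r
    have IH := ih (fun i => r i.succ) (fun i => hr i.succ)
    have hr0 : 1 ≤ r 0 := hr 0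
    set R' := ∑ i : Fin n, r i.succ with hR'
    have hexp : ∑ i : Fin n, ((i : ℕ) + 1) * r i.succ
        = (∑ i : Fin n, (i : ℕ) * r i.succ) + R' := by
      rw [hR', ← Finset.sum_add_distrib]
      congr 1; ext i; ring
    rw [h1, h2, hexp]
    nlinarith [IH, hr0, sq_nonneg (r 0 + R'), sq_nonneg R']

/-- Let `l ≥ 0` be a real number, `k ≥ 1` an integer, `a_1, …, a_k` real numbers with
`a_i ≤ a_1 + (i−1)·l`, and `r_1, …, r_k` positive integers with `r = r_1 + ⋯ + r_k`.
If `(∑ a_i r_i)/r > (r−1)·l/2` then `a_1 > 0`.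
Here `i : Fin k` encodes the index `i+1`, so `a 0` is `a_1` and `(i−1)` is `i.val`. -/
theorem stmt_1 (l : ℝ) (hl : 0 ≤ l) (k : ℕ) (hk : 1 ≤ k)
    (a : Fin k → ℝ) (r : Fin k → ℕ) (hpos : ∀ i, 0 < r i)
    (R : ℕ) (hsum : ∑ i, r i = R)
    (ha : ∀ i : Fin k, a i ≤ a ⟨0, hk⟩ + (i : ℕ) * l)
    (hmu : (∑ i, a i * (r i : ℝ)) / (R : ℝ) > ((R : ℝ) - 1) * l / 2) :
    a ⟨0, hk⟩ > 0 := by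
  have hRpos : 0 < R := by
    rw [← hsum]
    exact Finset.sum_pos (fun i _ => hpos i) ⟨⟨0, hk⟩, Finset.mem_univ _⟩
  have hRr : (0 : ℝ) < (R : ℝ) := by exact_mod_cast hRpos
  -- combinatorial bound, cast to ℝ
  have hcomb : 2 * ∑ i : Fin k, (i : ℕ) * r i + R ≤ R ^ 2 := by
    rw [← hsum]; exact aux_sum_bound k r (fun i => hpos i)
  have hcombR : 2 * (∑ i : Fin k, ((i : ℕ) : ℝ) * (r i : ℝ)) + (R : ℝ) ≤ (R : ℝ) ^ 2 := by
    exact_mod_cast hcomb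
  -- bound the weighted sum
  have hbound : ∑ i, a i * (r i : ℝ)
      ≤ a ⟨0, hk⟩ * (R : ℝ) + l * ∑ i : Fin k, ((i : ℕ) : ℝ) * (r i : ℝ) := by
    have : ∑ i, a i * (r i : ℝ)
        ≤ ∑ i : Fin k, (a ⟨0, hk⟩ + (i : ℕ) * l) * (r i : ℝ) := by
      apply Finset.sum_le_sum
      intro i _
      exact mul_le_mul_of_nonneg_right (ha i) (by positivity)
    calc ∑ i, a i * (r i : ℝ) ≤ ∑ i : Fin k, (a ⟨0, hk⟩ + (i : ℕ) * l) * (r i : ℝ) := this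
      _ = a ⟨0, hk⟩ * (∑ i : Fin k, (r i : ℝ)) + l * ∑ i : Fin k, ((i : ℕ) : ℝ) * (r i : ℝ) := by
          rw [Finset.mul_sum, Finset.mul_sum, ← Finset.sum_add_distrib]
          congr 1; ext i; ring
      _ = a ⟨0, hk⟩ * (R : ℝ) + l * ∑ i : Fin k, ((i : ℕ) : ℝ) * (r i : ℝ) := by
          rw [← hsum]; push_cast; ring
  have hmu' : ∑ i, a i * (r i : ℝ) > ((R : ℝ) - 1) * l / 2 * (R : ℝ) := by
    exact (lt_div_iff₀ hRr).mp hmu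
  -- conclude
  have hfin : a ⟨0, hk⟩ * (R : ℝ) > 0 := by nlinarith [hmu', hbound, hcombR, hl]
  nlinarith [hfin, hRr]
end

section
/- Fix integers g, l, and s ≥ 1, and vectors α_i = (r_i, d_i) ∈ ℤ² for i = 1, …, s. Define the bilinear form χ((r,d),(r',d')) = r·d' − d·r' + (1−g)·r·r' on ℤ², and for α = (r,d) and n ∈ ℤ set α(n) = (r, d + n·r). Then ∑_{k=0}^{s−1} ∑_{i=k+1}^{s} ∑_{j=k+2}^{s} χ(α_i(−k·l), α_j((1−j)·l)) = ∑_{1≤i<j≤s} ( i·χ(α_i,α_j) + (i−1)·χ(α_j,α_i) − i(j−1)·r_i·r_j·l ) + ∑_{i=1}^{s} ( (i−1)·χ(α_i,α_i) − (i(i−1)/2)·r_i²·l ). -/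
open Finset

/-- The Euler form `χ((r,d),(r',d')) = r·d' − d·r' + (1−g)·r·r'` on `ℤ²`. -/
def eulerForm (g : ℤ) (a b : ℤ × ℤ) : ℤ :=
  a.1 * b.2 - a.2 * b.1 + (1 - g) * a.1 * b.1

/-- The twist `α(n) = (r, d + n·r)` of `α = (r,d)` by `n`. -/
def twist (a : ℤ × ℤ) (n : ℤ) : ℤ × ℤ :=
  (a.1, a.2 + n * a.1)

private def G (n : ℕ) : ℤ := ∑ k ∈ range n, (k : ℤ)

private lemma G_mul_two (n : ℕ) : 2 * G n = (n : ℤ) * ((n : ℤ) - 1) := by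
  induction n with
  | zero => simp [G]
  | succ m ih =>
    rw [G, Finset.sum_range_succ, ← G]
    push_cast
    linear_combination ih

private lemma tw (g : ℤ) (a b : ℤ × ℤ) (m n : ℤ) :
    eulerForm g (twist a m) (twist b n) = eulerForm g a b + (n - m) * a.1 * b.1 := by
  simp only [eulerForm, twist]
  ring

private lemma sum_Icc_extend (a s : ℕ) (ha : 1 ≤ a) (f : ℕ → ℤ) :
    ∑ i ∈ Icc a s, f i = ∑ i ∈ Icc 1 s, if a ≤ i then f i else 0 := by
  rw [← Finset.sum_filter]
  apply Finset.sum_congr _ (fun _ _ => rfl)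
  ext x
  simp only [mem_filter, mem_Icc]
  omega

private lemma sum_range_contract (m s : ℕ) (h : m ≤ s) (f : ℕ → ℤ) :
    ∑ k ∈ range s, (if k < m then f k else 0) = ∑ k ∈ range m, f k := by
  rw [← Finset.sum_filter]
  apply Finset.sum_congr _ (fun _ _ => rfl)
  ext x
  simp only [mem_filter, mem_range]
  omega

private lemma ite_sum (P : Prop) [Decidable P] (t : Finset ℕ) (Q : ℕ → Prop) [DecidablePred Q]
    (x : ℕ → ℤ) :
    (if P then (∑ j ∈ t, if Q j then x j else 0) else 0)
      = ∑ j ∈ t, if P ∧ Q j then x j else 0 := by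
  split_ifs with h
  · exact Finset.sum_congr rfl fun j _ => by simp [h]
  · simp [h]

private lemma split3 (j s : ℕ) (h1 : 1 ≤ j) (h2 : j ≤ s) (f : ℕ → ℤ) :
    ∑ i ∈ Icc 1 s, f i
      = (∑ i ∈ Icc 1 (j - 1), f i) + f j + ∑ i ∈ Icc (j + 1) s, f i := by
  have e0 : Icc 1 s = Ioc 0 s := by rw [← Finset.Icc_add_one_left_eq_Ioc]; rfl
  have e1 : Icc 1 (j-1) = Ioc 0 (j-1) := by rw [← Finset.Icc_add_one_left_eq_Ioc]; rfl
  have e2 : Icc (j+1) s = Ioc j s := by rw [← Finset.Icc_add_one_left_eq_Ioc]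
  have e3 : Ioc (j-1) j = {j} := by ext x; simp [mem_Ioc]; omega
  rw [e0, e1, e2, ← Finset.sum_Ioc_consecutive f (Nat.zero_le (j-1)) (show j-1 ≤ s by omega),
    ← Finset.sum_Ioc_consecutive f (show j-1 ≤ j by omega) h2, e3, Finset.sum_singleton, add_assoc]

private lemma tri_swap (s : ℕ) (f : ℕ → ℕ → ℤ) :
    ∑ j ∈ Icc 1 s, ∑ i ∈ Icc (j + 1) s, f i j
      = ∑ j ∈ Icc 1 s, ∑ i ∈ Icc 1 (j - 1), f j i := by
  rw [Finset.sum_congr rfl (fun j _ => sum_Icc_extend (j+1) s (by omega) (fun i => f i j)),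
    Finset.sum_comm]
  apply Finset.sum_congr rfl
  intro j hj
  simp only [mem_Icc] at hj
  rw [← Finset.sum_filter]
  apply Finset.sum_congr _ (fun _ _ => rfl)
  ext x
  simp only [mem_filter, mem_Icc]
  omega

private lemma sum_f (m : ℕ) (l χ c w : ℤ) :
    ∑ k ∈ range m, (χ + (w + (k:ℤ) * l) * c) = (m:ℤ) * χ + ((m:ℤ) * w + G m * l) * c := by
  induction m with
  | zero => simp [G]
  | succ n ih =>
    have hG : G (n+1) = G n + n := by rw [G, Finset.sum_range_succ, ← G]
    rw [Finset.sum_range_succ, ih, hG]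
    push_cast
    ring

private def T (g l : ℤ) (α : ℕ → ℤ × ℤ) (i j : ℕ) : ℤ :=
  ((min i (j - 1) : ℕ) : ℤ) * eulerForm g (α i) (α j)
    + (((min i (j - 1) : ℕ) : ℤ) * ((1 - (j : ℤ)) * l) + G (min i (j - 1)) * l)
        * ((α i).1 * (α j).1)

/-- Fix integers `g`, `l`, `s ≥ 1` and vectors `α_i = (r_i, d_i) ∈ ℤ²` for `i = 1, …, s`. Then
`∑_{k=0}^{s−1} ∑_{i=k+1}^{s} ∑_{j=k+2}^{s} χ(α_i(−k·l), α_j((1−j)·l))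
 = ∑_{1≤i<j≤s} (i·χ(α_i,α_j) + (i−1)·χ(α_j,α_i) − i(j−1)·r_i·r_j·l)
   + ∑_{i=1}^{s} ((i−1)·χ(α_i,α_i) − (i(i−1)/2)·r_i²·l)`. -/
theorem stmt_4 (g l : ℤ) (s : ℕ) (hs : 1 ≤ s) (α : ℕ → ℤ × ℤ) :
    ∑ k ∈ range s, ∑ i ∈ Icc (k + 1) s, ∑ j ∈ Icc (k + 2) s,
        eulerForm g (twist (α i) (-(k : ℤ) * l)) (twist (α j) ((1 - (j : ℤ)) * l))
    = (∑ j ∈ Icc 1 s, ∑ i ∈ Icc 1 (j - 1),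
          ((i : ℤ) * eulerForm g (α i) (α j) + ((i : ℤ) - 1) * eulerForm g (α j) (α i)
            - (i : ℤ) * ((j : ℤ) - 1) * (α i).1 * (α j).1 * l))
      + ∑ i ∈ Icc 1 s,
          (((i : ℤ) - 1) * eulerForm g (α i) (α i)
            - (i : ℤ) * ((i : ℤ) - 1) / 2 * (α i).1 ^ 2 * l) := by
  have stepA : ∑ k ∈ range s, ∑ i ∈ Icc (k + 1) s, ∑ j ∈ Icc (k + 2) s,
        eulerForm g (twist (α i) (-(k : ℤ) * l)) (twist (α j) ((1 - (j : ℤ)) * l))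
      = ∑ i ∈ Icc 1 s, ∑ j ∈ Icc 1 s, T g l α i j := by
    have h1 : ∀ k ∈ range s,
        (∑ i ∈ Icc (k + 1) s, ∑ j ∈ Icc (k + 2) s,
          eulerForm g (twist (α i) (-(k : ℤ) * l)) (twist (α j) ((1 - (j : ℤ)) * l)))
        = ∑ i ∈ Icc 1 s, ∑ j ∈ Icc 1 s, if k + 1 ≤ i ∧ k + 2 ≤ j then
            eulerForm g (twist (α i) (-(k : ℤ) * l)) (twist (α j) ((1 - (j : ℤ)) * l))
          else 0 := by
      intro k _
      rw [sum_Icc_extend (k + 1) s (by omega)]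
      exact Finset.sum_congr rfl fun i _ => by
        rw [sum_Icc_extend (k + 2) s (by omega), ite_sum]
    rw [Finset.sum_congr rfl h1, Finset.sum_comm]
    apply Finset.sum_congr rfl
    intro i hi
    rw [Finset.sum_comm]
    apply Finset.sum_congr rfl
    intro j hj
    simp only [mem_Icc] at hi hj
    have hcond : ∀ k : ℕ, (k + 1 ≤ i ∧ k + 2 ≤ j) ↔ k < min i (j - 1) := fun k => by omega
    rw [Finset.sum_congr rfl fun k _ => if_congr (hcond k) rfl rfl,
      sum_range_contract _ s (by omega)]
    have hf : ∀ k : ℕ,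
        eulerForm g (twist (α i) (-(k : ℤ) * l)) (twist (α j) ((1 - (j : ℤ)) * l))
        = eulerForm g (α i) (α j)
            + ((1 - (j : ℤ)) * l + (k : ℤ) * l) * ((α i).1 * (α j).1) := by
      intro k; rw [tw]; ring
    rw [Finset.sum_congr rfl fun k _ => hf k, sum_f]
    rfl
  have pair_eq : ∀ j i : ℕ, 1 ≤ i → i + 1 ≤ j →
      T g l α i j + T g l α j i
        = (i : ℤ) * eulerForm g (α i) (α j) + ((i : ℤ) - 1) * eulerForm g (α j) (α i)
            - (i : ℤ) * ((j : ℤ) - 1) * (α i).1 * (α j).1 * l := by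
    intro j i hi hij
    have m1 : min i (j - 1) = i := by omega
    have m2 : min j (i - 1) = i - 1 := by omega
    have hc : ((i - 1 : ℕ) : ℤ) = (i : ℤ) - 1 := by omega
    have h1 := G_mul_two i
    have h2 := G_mul_two (i - 1)
    rw [hc] at h2
    have key2 : 2 * (G i + G (i - 1)) = 2 * ((i : ℤ) - 1) ^ 2 := by linear_combination h1 + h2
    have key : G i + G (i - 1) = ((i : ℤ) - 1) ^ 2 := by linarith
    simp only [T, m1, m2, hc]
    linear_combination (l * ((α i).1 * (α j).1)) * key
  have diag_eq : ∀ j : ℕ, 1 ≤ j →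
      T g l α j j
        = ((j : ℤ) - 1) * eulerForm g (α j) (α j)
            - (j : ℤ) * ((j : ℤ) - 1) / 2 * (α j).1 ^ 2 * l := by
    intro j hj
    have m : min j (j - 1) = j - 1 := by omega
    have hc : ((j - 1 : ℕ) : ℤ) = (j : ℤ) - 1 := by omega
    have h2 := G_mul_two (j - 1)
    rw [hc] at h2
    obtain ⟨c, hcc⟩ := Int.even_mul_succ_self ((j : ℤ) - 1)
    have hX : (j : ℤ) * ((j : ℤ) - 1) = c + c := by linear_combination hcc
    have hD : 2 * ((j : ℤ) * ((j : ℤ) - 1) / 2) = (j : ℤ) * ((j : ℤ) - 1) := by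
      rw [hX]; omega
    have key2 : 2 * (((j : ℤ) - 1) * (1 - (j : ℤ)) + G (j - 1)
        + (j : ℤ) * ((j : ℤ) - 1) / 2) = 0 := by linear_combination h2 + hD
    have key : ((j : ℤ) - 1) * (1 - (j : ℤ)) + G (j - 1)
        + (j : ℤ) * ((j : ℤ) - 1) / 2 = 0 := by linarith
    simp only [T, m, hc]
    linear_combination (l * ((α j).1 * (α j).1)) * key
  rw [stepA, Finset.sum_comm,
    Finset.sum_congr rfl fun j hj =>
      split3 j s (mem_Icc.mp hj).1 (mem_Icc.mp hj).2 (fun i => T g l α i j),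
    Finset.sum_add_distrib, Finset.sum_add_distrib, tri_swap]
  have hA : (∑ j ∈ Icc 1 s, ∑ i ∈ Icc 1 (j - 1), T g l α i j)
      + ∑ j ∈ Icc 1 s, ∑ i ∈ Icc 1 (j - 1), T g l α j i
      = ∑ j ∈ Icc 1 s, ∑ i ∈ Icc 1 (j - 1),
          ((i : ℤ) * eulerForm g (α i) (α j) + ((i : ℤ) - 1) * eulerForm g (α j) (α i)
            - (i : ℤ) * ((j : ℤ) - 1) * (α i).1 * (α j).1 * l) := by
    rw [← Finset.sum_add_distrib]
    apply Finset.sum_congr rfl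
    intro j hj
    rw [← Finset.sum_add_distrib]
    apply Finset.sum_congr rfl
    intro i hi
    simp only [mem_Icc] at hi hj
    exact pair_eq j i hi.1 (by omega)
  have hB : ∑ j ∈ Icc 1 s, T g l α j j
      = ∑ i ∈ Icc 1 s,
          (((i : ℤ) - 1) * eulerForm g (α i) (α i)
            - (i : ℤ) * ((i : ℤ) - 1) / 2 * (α i).1 ^ 2 * l) := by
    apply Finset.sum_congr rfl
    intro j hj
    exact diag_eq j (mem_Icc.mp hj).1
  linarith [hA, hB]
end
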